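/- Let X ~ D_{Λ+c,σ} be a discrete Gaussian on a shifted lattice Λ+c ⊂ ℂ^k, and A ∈ M_k(ℂ). If ε := ε_Λ(σ) < 1, then for all t ∈ ℂ^k, E[e^{Re(t† A X)}] ≤ ((1+ε)/(1−ε)) · e^{(σ²/2)‖A†t‖²}. In particular, X is δ-subgaussian with parameter σ, where δ = ln((1+ε)/(1−ε)). -/

import Mathlib

open scoped Real Matrix

lemma coord_sq (sig : ℝ) (hsig : 0 < sig) (x uu : ℂ) :
    -(‖x‖ ^ 2) / sig ^ 2 + ((starRingEnd ℂ) uu * x).re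
      = sig ^ 2 / 4 * (‖uu‖ ^ 2)
        + -(‖((sig ^ 2 / 2 : ℝ) : ℂ) * uu - x‖ ^ 2) / sig ^ 2 := by
  rw [Complex.sq_norm, Complex.sq_norm, Complex.sq_norm]
  rw [show ((sig ^ 2 / 2 : ℝ) : ℂ) * uu - x = -(x - ((sig ^ 2 / 2 : ℝ) : ℂ) * uu) by ring,
    Complex.normSq_neg, Complex.normSq_sub, Complex.normSq_mul, Complex.normSq_ofReal,
    map_mul, Complex.conj_ofReal]
  have h1 : (x * (((sig ^ 2 / 2 : ℝ) : ℂ) * (starRingEnd ℂ) uu)).re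
      = sig ^ 2 / 2 * (x * (starRingEnd ℂ) uu).re := by
    rw [show x * (((sig ^ 2 / 2 : ℝ) : ℂ) * (starRingEnd ℂ) uu)
        = ((sig ^ 2 / 2 : ℝ) : ℂ) * (x * (starRingEnd ℂ) uu) by ring, Complex.re_ofReal_mul]
  rw [h1, show (starRingEnd ℂ) uu * x = x * (starRingEnd ℂ) uu by ring]
  have hs : sig ^ 2 ≠ 0 := by positivity
  field_simp
  ring

/-- (Moment generating function of the discrete Gaussian.) Let
`X ~ D_{Λ+c,σ}` be a discrete Gaussian on the shifted lattice `Λ + c ⊂ ℂᵏ`, i.e.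
`P(X = λ + c) = f_σ(λ+c) / f_{σ,-c}(Λ)` with `f_σ(x) = (πσ²)^{-k} e^{-‖x‖²/σ²}`, and let
`A ∈ M_k(ℂ)`. If the flatness factor satisfies `ε := ε_Λ(σ) < 1` (`V` is the covolume of
`Λ`), then for every `t ∈ ℂᵏ`,
`E[e^{Re(t†AX)}] ≤ ((1+ε)/(1−ε)) e^{(σ²/2)‖A†t‖²}`; in particular `X` is `δ`-subgaussian
with parameter `σ` for `δ = ln((1+ε)/(1−ε))`. -/
theorem discrete_gaussian_mgf_bound
    (k : ℕ) (Λ : AddSubgroup (Fin k → ℂ)) (V sig ε : ℝ) (hV : 0 < V) (hsig : 0 < sig)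
    (hε : ε < 1)
    (hflat : ∀ c' : Fin k → ℂ,
      |V * (∑' l : Λ, (π * sig ^ 2)⁻¹ ^ k *
          Real.exp (-(∑ i, ‖c' i - (l : Fin k → ℂ) i‖ ^ 2) / sig ^ 2)) - 1| ≤ ε)
    (c : Fin k → ℂ) (A : Matrix (Fin k) (Fin k) ℂ) :
    ∀ t : Fin k → ℂ,
      (∑' l : Λ,
          ((π * sig ^ 2)⁻¹ ^ k *
              Real.exp (-(∑ i, ‖(l : Fin k → ℂ) i + c i‖ ^ 2) / sig ^ 2) /
            ∑' m : Λ, (π * sig ^ 2)⁻¹ ^ k *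
              Real.exp (-(∑ i, ‖(m : Fin k → ℂ) i + c i‖ ^ 2) / sig ^ 2)) *
            Real.exp ((star t ⬝ᵥ (A *ᵥ ((l : Fin k → ℂ) + c))).re))
        ≤ ((1 + ε) / (1 - ε)) * Real.exp (sig ^ 2 / 2 * ∑ i, ‖(Aᴴ *ᵥ t) i‖ ^ 2) := by
  have hε0 : 0 ≤ ε := le_trans (abs_nonneg _) (hflat 0)
  have h1ε : 0 < 1 - ε := by linarith
  intro t
  set N : ℝ := (π * sig ^ 2)⁻¹ ^ k with hN
  have hNpos : 0 < N := by positivity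
  set u : Fin k → ℂ := Aᴴ *ᵥ t with hu
  set U : ℝ := ∑ i, ‖u i‖ ^ 2 with hU
  have hU0 : 0 ≤ U := Finset.sum_nonneg fun i _ => sq_nonneg _
  set c' : Fin k → ℂ := fun i => ((sig ^ 2 / 2 : ℝ) : ℂ) * u i - c i with hc'
  -- summability of any flatness-form family
  have hsum : ∀ d : Fin k → ℂ, Summable (fun l : Λ =>
      N * Real.exp (-(∑ i, ‖d i - (l : Fin k → ℂ) i‖ ^ 2) / sig ^ 2)) := by
    intro d
    by_contra h
    have h2 := hflat d
    rw [tsum_eq_zero_of_not_summable h, mul_zero, zero_sub, abs_neg, abs_one] at h2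
    linarith
  -- denominator
  have hden : (fun l : Λ =>
        N * Real.exp (-(∑ i, ‖(-c) i - (l : Fin k → ℂ) i‖ ^ 2) / sig ^ 2))
      = fun l : Λ =>
        N * Real.exp (-(∑ i, ‖(l : Fin k → ℂ) i + c i‖ ^ 2) / sig ^ 2) := by
    funext l
    have habs : ∀ i, ‖(-c) i - (l : Fin k → ℂ) i‖
        = ‖(l : Fin k → ℂ) i + c i‖ := by
      intro i
      rw [show (-c) i - (l : Fin k → ℂ) i = -((l : Fin k → ℂ) i + c i) by
        simp [Pi.neg_apply]; ring]
      rw [norm_neg]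
    simp only [habs]
  set S : ℝ := ∑' m : Λ,
      N * Real.exp (-(∑ i, ‖(m : Fin k → ℂ) i + c i‖ ^ 2) / sig ^ 2) with hSdef
  have hSflat := hflat (-c)
  rw [hden, ← hSdef] at hSflat
  have hS_lb : (1 - ε) / V ≤ S := by
    rw [div_le_iff₀ hV]
    have := (abs_le.mp hSflat).1
    linarith
  have hSpos : 0 < S := lt_of_lt_of_le (by positivity) hS_lb
  -- numerator tsum
  set T : ℝ := ∑' l : Λ,
      N * Real.exp (-(∑ i, ‖c' i - (l : Fin k → ℂ) i‖ ^ 2) / sig ^ 2) with hTdef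
  have hTflat := hflat c'
  rw [← hTdef] at hTflat
  have hT_ub : T ≤ (1 + ε) / V := by
    rw [le_div_iff₀ hV]
    have := (abs_le.mp hTflat).2
    linarith
  have hT0 : 0 ≤ T := tsum_nonneg fun l => by positivity
  -- key pointwise identity
  have hkey : ∀ l : Λ,
      N * Real.exp (-(∑ i, ‖(l : Fin k → ℂ) i + c i‖ ^ 2) / sig ^ 2) *
        Real.exp ((star t ⬝ᵥ (A *ᵥ ((l : Fin k → ℂ) + c))).re)
      = Real.exp (sig ^ 2 / 4 * U) *
        (N * Real.exp (-(∑ i, ‖c' i - (l : Fin k → ℂ) i‖ ^ 2) / sig ^ 2)) := by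
    intro l
    have hdot : star t ⬝ᵥ (A *ᵥ ((l : Fin k → ℂ) + c)) = star u ⬝ᵥ ((l : Fin k → ℂ) + c) := by
      rw [hu, Matrix.star_mulVec, Matrix.conjTranspose_conjTranspose, Matrix.dotProduct_mulVec]
    have hre : (star u ⬝ᵥ ((l : Fin k → ℂ) + c)).re
        = ∑ i, ((starRingEnd ℂ) (u i) * ((l : Fin k → ℂ) i + c i)).re := by
      simp [dotProduct, Complex.re_sum, Pi.star_apply, Pi.add_apply]
    have hexp : -(∑ i, ‖(l : Fin k → ℂ) i + c i‖ ^ 2) / sig ^ 2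
        + (star u ⬝ᵥ ((l : Fin k → ℂ) + c)).re
        = sig ^ 2 / 4 * U + -(∑ i, ‖c' i - (l : Fin k → ℂ) i‖ ^ 2) / sig ^ 2 := by
      rw [hre, hU, neg_div, Finset.sum_div, ← Finset.sum_neg_distrib,
        ← Finset.sum_add_distrib, Finset.mul_sum,
        neg_div (sig ^ 2) (∑ i, ‖c' i - (l : Fin k → ℂ) i‖ ^ 2),
        Finset.sum_div, ← Finset.sum_neg_distrib, ← Finset.sum_add_distrib]
      apply Finset.sum_congr rfl
      intro i _
      have hcc : c' i - (l : Fin k → ℂ) i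
          = ((sig ^ 2 / 2 : ℝ) : ℂ) * u i - ((l : Fin k → ℂ) i + c i) := by
        simp only [hc']; ring
      have h0 := coord_sq sig hsig ((l : Fin k → ℂ) i + c i) (u i)
      rw [neg_div, neg_div] at h0
      rw [hcc]
      exact h0
    rw [mul_assoc, ← Real.exp_add, hdot, hexp, Real.exp_add]
    ring
  -- main computation
  have hterm : ∀ l : Λ,
      (N * Real.exp (-(∑ i, ‖(l : Fin k → ℂ) i + c i‖ ^ 2) / sig ^ 2) / S) *
        Real.exp ((star t ⬝ᵥ (A *ᵥ ((l : Fin k → ℂ) + c))).re)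
      = Real.exp (sig ^ 2 / 4 * U) *
          ((N * Real.exp (-(∑ i, ‖c' i - (l : Fin k → ℂ) i‖ ^ 2) / sig ^ 2)) / S) := by
    intro l
    rw [div_mul_eq_mul_div, hkey l, mul_div_assoc]
  calc (∑' l : Λ,
          (N * Real.exp (-(∑ i, ‖(l : Fin k → ℂ) i + c i‖ ^ 2) / sig ^ 2) / S) *
            Real.exp ((star t ⬝ᵥ (A *ᵥ ((l : Fin k → ℂ) + c))).re))
      = Real.exp (sig ^ 2 / 4 * U) * (T / S) := by
        rw [tsum_congr hterm, tsum_mul_left, hTdef, tsum_div_const]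
    _ ≤ ((1 + ε) / (1 - ε)) * Real.exp (sig ^ 2 / 2 * U) := by
        rw [mul_comm (Real.exp (sig ^ 2 / 4 * U))]
        apply mul_le_mul
        · rw [div_le_div_iff₀ hSpos h1ε]
          calc T * (1 - ε) ≤ ((1 + ε) / V) * (1 - ε) :=
                mul_le_mul_of_nonneg_right hT_ub h1ε.le
            _ = (1 + ε) * ((1 - ε) / V) := by ring
            _ ≤ (1 + ε) * S := mul_le_mul_of_nonneg_left hS_lb (by linarith)
        · exact Real.exp_le_exp.mpr (by nlinarith)
        · positivity
        · positivity
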